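/- Let G = C_n ⊕ C_{mn} with basis (e_1, e_2), ord(e_1) = n > 1, ord(e_2) = mn. For each i ∈ [0, n−1], the sequence U_i = e_1^{n−1} · ((−1)^{i+1}e_2 + (i+1)e_1) · ((−1)^{i+1}e_2 − i e_1) · ((−1)^{i+1}e_2)^{mn−2} is a minimal zero-sum sequence over G of length mn + n − 1 = D*(G). -/

import Mathlib

open scoped Pointwise

section Defs

variable (G : Type*) [AddCommGroup G]

/-- `S` is a minimal zero-sum sequence (an atom of the monoid `B(G)` of zero-sum
sequences): it is nonempty, has sum zero, and no proper nonempty subsequence has sum zero. -/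
def IsMinZS (S : Multiset G) : Prop :=
  S ≠ 0 ∧ S.sum = 0 ∧ ∀ T : Multiset G, T ≤ S → T ≠ 0 → T ≠ S → T.sum ≠ 0

/-- `S` is a product of `k` atoms of `B(G)`. -/
def IsProdOfAtoms (k : ℕ) (S : Multiset G) : Prop :=
  ∃ L : Multiset (Multiset G), Multiset.card L = k ∧ (∀ U ∈ L, IsMinZS G U) ∧ L.sum = S

/-- `S` is a product of atoms of length `2`. -/
def IsProd2Atoms (S : Multiset G) : Prop :=
  ∃ L : Multiset (Multiset G), (∀ U ∈ L, IsMinZS G U ∧ Multiset.card U = 2) ∧ L.sum = S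

/-- The set of lengths of `A` in `B(G)`. -/
def LSet (A : Multiset G) : Set ℕ := { k | IsProdOfAtoms G k A }

/-- `U_k(G)`: the set of `m` such that some product of `k` atoms equals a product of `m` atoms. -/
def UkSet (k : ℕ) : Set ℕ :=
  { m | ∃ S : Multiset G, IsProdOfAtoms G k S ∧ IsProdOfAtoms G m S }

/-- `ρ_k(G) = sup U_k(G)`. -/
noncomputable def rho (k : ℕ) : ℕ := sSup (UkSet G k)

/-- The Davenport constant `D(G)`: the maximal length of a minimal zero-sum sequence. -/
noncomputable def Dav : ℕ :=
  sSup { n : ℕ | ∃ S : Multiset G, IsMinZS G S ∧ Multiset.card S = n }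

/-- `A` is pair-nice with factorization into `2k` atoms of length `d` (where `d` plays
the role of `D^*(G)`). -/
def PairNiceWith (d k : ℕ) (A : Multiset G) : Prop :=
  1 ≤ k ∧ ∃ (U : Fin (2 * k) → Multiset G) (g : Fin (2 * k) → G),
    (∀ i, IsMinZS G (U i) ∧ Multiset.card (U i) = d) ∧
    (∑ i, U i) = A ∧ (∀ i, g i ∈ U i) ∧
    IsProd2Atoms G (∑ i, ({g i} : Multiset G))

/-- `A` is pair-nice (with respect to `G`, with `d = D^*(G)`). -/
def PairNice (d : ℕ) (A : Multiset G) : Prop := ∃ k, PairNiceWith G d k A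

/-- `A` is nice with factorization into `2k+1` atoms of length `d` (where `d` plays the
role of `D^*(G)`), as in Definition 3.1 of the paper. -/
def NiceWith [DecidableEq G] (d k : ℕ) (A : Multiset G) : Prop :=
  1 ≤ k ∧ ∃ (U : Fin (2 * k + 1) → Multiset G) (g : Fin (2 * k + 1) → G),
    (∀ i, IsMinZS G (U i) ∧ Multiset.card (U i) = d) ∧
    (∑ i, U i) = A ∧ (∀ i, g i ∈ U i) ∧
    ((Odd d ∧ IsProd2Atoms G (A - ∑ i, ({g i} : Multiset G)) ∧
        ∃ W : Fin k → Multiset G, (∀ j, IsMinZS G (W j)) ∧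
          (∀ j : Fin k, Multiset.card (W j) = if (j : ℕ) = 0 then 3 else 2) ∧
          (∑ j, W j) = ∑ i, ({g i} : Multiset G)) ∨
      (Even d ∧ ∃ h : G, h ∈ A - ∑ i, ({g i} : Multiset G) ∧
        IsProd2Atoms G (A - ((∑ i, ({g i} : Multiset G)) + {h})) ∧
        IsProd2Atoms G ((∑ i, ({g i} : Multiset G)) + {h})))

/-- `A` is nice (with respect to `G`, with `d = D^*(G)`). -/
def Nice [DecidableEq G] (d : ℕ) (A : Multiset G) : Prop := ∃ k, NiceWith G d k A

end Defs

section MonoidDefs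

variable (H : Type*) [CommMonoid H]

/-- `U_k(H)` for a monoid `H`: the set of `m` such that some product of `k` irreducible
elements (atoms) of `H` equals a product of `m` atoms. -/
def UkM (k : ℕ) : Set ℕ :=
  { m | ∃ L L' : Multiset H, Multiset.card L = k ∧ Multiset.card L' = m ∧
      (∀ u ∈ L, Irreducible u) ∧ (∀ v ∈ L', Irreducible v) ∧ L.prod = L'.prod }

/-- `ρ_k(H) = sup U_k(H)`. -/
noncomputable def rhoM (k : ℕ) : ℕ := sSup (UkM H k)

end MonoidDefs

namespace Stmt6Aux

/-- Decompose a sub-multiset of a sum into sub-multisets of the parts. -/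
lemma le_add_decomp {α : Type*} [DecidableEq α] {T A B : Multiset α} (h : T ≤ A + B) :
    ∃ T₁ T₂ : Multiset α, T₁ ≤ A ∧ T₂ ≤ B ∧ T = T₁ + T₂ := by
  refine ⟨T ∩ A, T - T ∩ A, Multiset.inter_le_right, ?_, ?_⟩
  · rw [Multiset.le_iff_count]
    intro a
    have h' := (Multiset.le_iff_count.1 h) a
    simp only [Multiset.count_sub, Multiset.count_inter, Multiset.count_add] at *
    omega
  · exact (tsub_add_cancel_of_le Multiset.inter_le_left).symm.trans (add_comm _ _)

lemma le_pair_cases {α : Type*} {a b : α} {S : Multiset α} (h : S ≤ {a, b}) :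
    S = 0 ∨ S = {a} ∨ S = {b} ∨ S = {a, b} := by
  have hc : Multiset.card S ≤ 2 := by
    simpa using Multiset.card_le_card h
  interval_cases hS : Multiset.card S
  · exact Or.inl (Multiset.card_eq_zero.1 hS)
  · obtain ⟨x, hx⟩ := Multiset.card_eq_one.1 hS
    have hxm : x ∈ ({a, b} : Multiset α) := Multiset.mem_of_le h (by simp [hx])
    rcases (by simpa using hxm : x = a ∨ x = b) with h1 | h1 <;> subst h1
    · exact Or.inr (Or.inl hx)
    · exact Or.inr (Or.inr (Or.inl hx))
  · refine Or.inr (Or.inr (Or.inr (Multiset.eq_of_le_of_card_le h ?_)))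
    simp [hS]

lemma side0 (N y : ℕ) (h2 : 2 ≤ N) (hy : y ≤ N - 2) (hd : N ∣ y) : y = 0 :=
  Nat.eq_zero_of_dvd_of_lt hd (by omega) |>.symm ▸ rfl

lemma side1 (N y : ℕ) (h2 : 2 ≤ N) (hy : y ≤ N - 2) (hd : N ∣ y + 1) : False := by
  have := Nat.eq_zero_of_dvd_of_lt hd (by omega)
  omega

lemma side2 (N y : ℕ) (h2 : 2 ≤ N) (hy : y ≤ N - 2) (hd : N ∣ y + 2) : y = N - 2 := by
  have h1 := Nat.le_of_dvd (by omega) hd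
  have h3 : y + 2 ≤ N := by omega
  clear hd
  omega

lemma sideC (N n : ℕ) (h2 : 2 ≤ N) (hn : 1 ≤ n) : n - 1 + 2 + (N - 2) = N + n - 1 := by
  omega

end Stmt6Aux


/-- In `G = C_n ⊕ C_{mn}` with basis `(e₁, e₂)`, for `i ∈ [0, n-1]` the sequence
`U_i = e₁^{n-1} · ((-1)^{i+1}e₂ + (i+1)e₁) · ((-1)^{i+1}e₂ - i e₁) · ((-1)^{i+1}e₂)^{mn-2}`
is a minimal zero-sum sequence of length `mn + n - 1 = D^*(G)`. -/
theorem stmt6 (n m : ℕ) (hn : 1 < n) (hm : 1 ≤ m) (i : ℕ) (hi : i ≤ n - 1)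
    (e1 e2 : ZMod n × ZMod (m * n)) (he1 : e1 = (1, 0)) (he2 : e2 = (0, 1))
    (U : Multiset (ZMod n × ZMod (m * n)))
    (hU : U = Multiset.replicate (n - 1) e1 +
      {((-1 : ℤ) ^ (i + 1)) • e2 + ((i : ℤ) + 1) • e1,
       ((-1 : ℤ) ^ (i + 1)) • e2 - (i : ℤ) • e1} +
      Multiset.replicate (m * n - 2) (((-1 : ℤ) ^ (i + 1)) • e2)) :
    IsMinZS (ZMod n × ZMod (m * n)) U ∧ Multiset.card U = m * n + n - 1 := by
  have hmn2 : 2 ≤ m * n := by nlinarith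
  set ε : ℤ := (-1) ^ (i + 1) with hε
  have hε2 : ε * ε = 1 := by
    rw [hε, ← pow_add]
    exact (neg_one_pow_eq_one_iff_even (by norm_num)).2 ⟨i + 1, by ring⟩
  set a : ZMod n × ZMod (m * n) := ε • e2 + ((i : ℤ) + 1) • e1 with ha
  set b : ZMod n × ZMod (m * n) := ε • e2 - (i : ℤ) • e1 with hb
  set c : ZMod n × ZMod (m * n) := ε • e2 with hc
  have hcard : Multiset.card U = m * n + n - 1 := by
    subst hU
    simp only [Multiset.card_add, Multiset.card_replicate, Multiset.card_pair]
    exact Stmt6Aux.sideC (m * n) n hmn2 (by omega)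
  have hsum_snd : ∀ (x y : ℕ) (S : Multiset (ZMod n × ZMod (m * n))),
      ((Multiset.replicate x e1 + S + Multiset.replicate y c).sum).2
        = S.sum.2 + (y : ZMod (m * n)) * (ε : ZMod (m * n)) := by
    intro x y S
    simp [hc, he1, he2, Multiset.sum_replicate, Prod.smul_mk, smul_eq_mul, zsmul_eq_mul,
      mul_comm]
  have hεunit : ∀ z : ZMod (m * n), z * (ε : ZMod (m * n)) = 0 → z = 0 := by
    intro z hz
    have h' : z * (ε : ZMod (m * n)) * (ε : ZMod (m * n)) = 0 := by rw [hz]; ring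
    rw [mul_assoc, ← Int.cast_mul, hε2] at h'
    simpa using h'
  have hdvd_of : ∀ (k : ℕ), ((k : ZMod (m * n)) * (ε : ZMod (m * n)) = 0) → m * n ∣ k := by
    intro k hk
    exact (ZMod.natCast_eq_zero_iff k (m * n)).1 (hεunit _ hk)
  have hgen : ∀ (x y : ℕ) (S : Multiset (ZMod n × ZMod (m * n))),
      (Multiset.replicate x e1 + S + Multiset.replicate y c).sum
        = ((x : ZMod n), 0) + S.sum + ((0 : ZMod n), (y : ZMod (m * n)) * (ε : ZMod (m * n))) := by
    intro x y S
    simp [hc, he1, he2, Multiset.sum_replicate, Prod.smul_mk, smul_eq_mul, zsmul_eq_mul,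
      mul_comm, Prod.ext_iff]
  have hab : a + b = ((1 : ZMod n), 2 * (ε : ZMod (m * n))) := by
    rw [ha, hb, hc, he1, he2]
    simp only [Prod.smul_mk, Prod.mk_add_mk, Prod.mk_sub_mk, Prod.mk.injEq, smul_zero,
      zsmul_eq_mul, mul_one, mul_zero]
    constructor
    · push_cast; ring
    · push_cast; ring
  have habs : ({a, b} : Multiset (ZMod n × ZMod (m * n))).sum = a + b := by
    simp [Multiset.insert_eq_cons]
  have hUsum : U.sum = 0 := by
    rw [hU, hgen (n - 1) (m * n - 2) {a, b}, habs, hab]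
    have h1 : ((n - 1 : ℕ) : ZMod n) + 1 = 0 := by
      have hn1 : (((n - 1) + 1 : ℕ) : ZMod n) = 0 := by
        rw [Nat.sub_add_cancel (by omega)]
        exact ZMod.natCast_self n
      push_cast at hn1
      linear_combination hn1
    have h2 : (((m * n - 2 : ℕ) : ZMod (m * n)) + 2) * (ε : ZMod (m * n)) = 0 := by
      have hn2 : (((m * n - 2) + 2 : ℕ) : ZMod (m * n)) = 0 := by
        rw [Nat.sub_add_cancel hmn2]
        exact ZMod.natCast_self (m * n)
      push_cast at hn2
      rw [hn2, zero_mul]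
    ext
    · simpa using h1
    · simp only [Prod.snd_add, Prod.snd_zero]
      linear_combination h2
  refine ⟨⟨?_, hUsum, ?_⟩, hcard⟩
  · intro h0
    have hc0 := congrArg Multiset.card h0
    rw [hcard] at hc0
    simp only [Multiset.card_zero] at hc0
    omega
  · -- minimality
    intro T hTle hT0 hTU hTsum
    rw [hU] at hTle
    obtain ⟨T₁₂, T₃, hT₁₂, hT₃le, hTeq⟩ := Stmt6Aux.le_add_decomp hTle
    obtain ⟨T₁, T₂, hT₁le, hT₂le, hT₁₂eq⟩ := Stmt6Aux.le_add_decomp hT₁₂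
    obtain ⟨x, hxle, hT₁⟩ := Multiset.le_replicate_iff.1 hT₁le
    obtain ⟨y, hyle, hT₃⟩ := Multiset.le_replicate_iff.1 hT₃le
    subst hT₁ hT₃ hT₁₂eq
    rw [hTeq] at hTsum hT0 hTU
    have key : ∀ (s : ℕ), (T₂.sum).2 = (s : ZMod (m * n)) * (ε : ZMod (m * n)) →
        m * n ∣ y + s := by
      intro s hs
      have h2 := congrArg Prod.snd hTsum
      rw [hsum_snd x y T₂, hs] at h2
      apply hdvd_of
      push_cast
      simp only [Prod.snd_zero] at h2
      linear_combination h2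
    rcases Stmt6Aux.le_pair_cases hT₂le with h | h | h | h <;> subst h
    · -- T₂ = 0
      have hy0 : y = 0 := Stmt6Aux.side0 (m * n) y hmn2 hyle (by
        simpa using key 0 (by simp))
      subst hy0
      have h1 := congrArg Prod.fst hTsum
      rw [hgen x 0 0] at h1
      simp only [Multiset.sum_zero, Prod.fst_add, Prod.fst_zero, add_zero] at h1
      have hx0 : x = 0 := by
        have hd : (n : ℕ) ∣ x := (ZMod.natCast_eq_zero_iff x n).1 (by
          linear_combination h1)
        exact Nat.eq_zero_of_dvd_of_lt hd (by omega) |>.symm ▸ rfl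
      subst hx0
      simp at hT0
    · -- T₂ = {a}
      have hs : (({a} : Multiset _).sum).2
          = ((1 : ℕ) : ZMod (m * n)) * (ε : ZMod (m * n)) := by
        simp [ha, hc, he1, he2, Prod.smul_mk, zsmul_eq_mul]
      exact absurd (key 1 hs) (fun hd => Stmt6Aux.side1 (m * n) y hmn2 hyle hd)
    · -- T₂ = {b}
      have hs : (({b} : Multiset _).sum).2
          = ((1 : ℕ) : ZMod (m * n)) * (ε : ZMod (m * n)) := by
        simp [hb, hc, he1, he2, Prod.smul_mk, zsmul_eq_mul]
      exact absurd (key 1 hs) (fun hd => Stmt6Aux.side1 (m * n) y hmn2 hyle hd)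
    · -- T₂ = {a, b}
      have hs : (({a, b} : Multiset _).sum).2
          = ((2 : ℕ) : ZMod (m * n)) * (ε : ZMod (m * n)) := by
        rw [habs, hab]
        push_cast
        ring
      have hy : y = m * n - 2 := Stmt6Aux.side2 (m * n) y hmn2 hyle (key 2 hs)
      subst hy
      have h1 := congrArg Prod.fst hTsum
      rw [hgen x (m * n - 2) {a, b}, habs, hab] at h1
      simp only [Prod.fst_add, Prod.fst_zero, add_zero] at h1
      have hx : x = n - 1 := by
        have hd : (n : ℕ) ∣ x + 1 := by
          rw [← ZMod.natCast_eq_zero_iff]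
          push_cast
          linear_combination h1
        have := Nat.le_of_dvd (by omega) hd
        omega
      subst hx
      exact hTU (by rw [hU])
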